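/- Each of the six functions J₀₁, J₀₂, J₀₃, J₁₂, J₁₃, J₂₃ of the geodesic polar realization Poisson commutes with the kinetic energy T at every point of D: {J_{μν}, T} = 0 for all the six generators. -/

import Mathlib

namespace Paper
noncomputable section

/-- The κ-dependent cosine Cκ(x) = ∑ (−κ)^l x^{2l}/(2l)!. -/
def Ck (κ x : ℝ) : ℝ := ∑' l : ℕ, (-κ) ^ l * x ^ (2 * l) / (Nat.factorial (2 * l) : ℝ)

/-- The κ-dependent sine Sκ(x) = ∑ (−κ)^l x^{2l+1}/(2l+1)!. -/
def Sk (κ x : ℝ) : ℝ := ∑' l : ℕ, (-κ) ^ l * x ^ (2 * l + 1) / (Nat.factorial (2 * l + 1) : ℝ)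

/-- The κ-dependent tangent Tκ(x) = Sκ(x)/Cκ(x). -/
def Tk (κ x : ℝ) : ℝ := Sk κ x / Ck κ x

/-- Phase space ℝ³ × ℝ³ ≃ ℝ⁶ with canonical coordinates
`(r, θ, φ, p_r, p_θ, p_φ) = (x 0, x 1, x 2, x 3, x 4, x 5)`. -/
abbrev Pt := Fin 6 → ℝ

/-- Partial derivative in the i-th coordinate direction. -/
def pd (f : Pt → ℝ) (i : Fin 6) (x : Pt) : ℝ := fderiv ℝ f x (Pi.single i 1)

/-- Canonical Poisson bracket {f,g} = ∑_{q} (∂f/∂q ∂g/∂p_q − ∂g/∂q ∂f/∂p_q). -/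
def pb (f g : Pt → ℝ) (x : Pt) : ℝ :=
  ∑ i : Fin 3,
    (pd f ⟨i.1, by omega⟩ x * pd g ⟨i.1 + 3, by omega⟩ x
      - pd g ⟨i.1, by omega⟩ x * pd f ⟨i.1 + 3, by omega⟩ x)

/-- Gradient of a function on phase space, as a vector in ℝ⁶. -/
def grad (f : Pt → ℝ) (x : Pt) : Fin 6 → ℝ := fun i => pd f i x

/-- The open domain D where Sκ₁(r), Cκ₁(r), Sκ₂(θ), Cκ₂(θ), cos φ, sin φ are nonzero. -/
def D (κ₁ κ₂ : ℝ) : Set Pt :=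
  {x | Sk κ₁ (x 0) ≠ 0 ∧ Ck κ₁ (x 0) ≠ 0 ∧ Sk κ₂ (x 1) ≠ 0 ∧ Ck κ₂ (x 1) ≠ 0 ∧
       Real.cos (x 2) ≠ 0 ∧ Real.sin (x 2) ≠ 0}

/-- J₀₁ = Cκ₂(θ)p_r − (Sκ₂(θ)/Tκ₁(r))p_θ. -/
def J01 (κ₁ κ₂ : ℝ) (x : Pt) : ℝ :=
  Ck κ₂ (x 1) * x 3 - (Sk κ₂ (x 1) / Tk κ₁ (x 0)) * x 4

/-- J₀₂. -/
def J02 (κ₁ κ₂ : ℝ) (x : Pt) : ℝ :=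
  κ₂ * Sk κ₂ (x 1) * Real.cos (x 2) * x 3
    + (Ck κ₂ (x 1) * Real.cos (x 2) / Tk κ₁ (x 0)) * x 4
    - (Real.sin (x 2) / (Tk κ₁ (x 0) * Sk κ₂ (x 1))) * x 5

/-- J₀₃. -/
def J03 (κ₁ κ₂ : ℝ) (x : Pt) : ℝ :=
  κ₂ * Sk κ₂ (x 1) * Real.sin (x 2) * x 3
    + (Ck κ₂ (x 1) * Real.sin (x 2) / Tk κ₁ (x 0)) * x 4
    + (Real.cos (x 2) / (Tk κ₁ (x 0) * Sk κ₂ (x 1))) * x 5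

/-- J₁₂ = cos φ·p_θ − (sin φ/Tκ₂(θ))p_φ. -/
def J12 (κ₂ : ℝ) (x : Pt) : ℝ :=
  Real.cos (x 2) * x 4 - (Real.sin (x 2) / Tk κ₂ (x 1)) * x 5

/-- J₁₃ = sin φ·p_θ + (cos φ/Tκ₂(θ))p_φ. -/
def J13 (κ₂ : ℝ) (x : Pt) : ℝ :=
  Real.sin (x 2) * x 4 + (Real.cos (x 2) / Tk κ₂ (x 1)) * x 5

/-- J₂₃ = p_φ. -/
def J23 (x : Pt) : ℝ := x 5

/-- Kinetic energy T. -/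
def Tkin (κ₁ κ₂ : ℝ) (x : Pt) : ℝ :=
  (1 / 2) * ((x 3) ^ 2 + (x 4) ^ 2 / (κ₂ * Sk κ₁ (x 0) ^ 2)
    + (x 5) ^ 2 / (κ₂ * Sk κ₁ (x 0) ^ 2 * Sk κ₂ (x 1) ^ 2))

/-- The superintegrable potential U with arbitrary radial function F. -/
def U (κ₁ κ₂ : ℝ) (F : ℝ → ℝ) (β₁ β₂ β₃ : ℝ) (x : Pt) : ℝ :=
  F (x 0) + (1 / Sk κ₁ (x 0) ^ 2) *
    (β₁ / Ck κ₂ (x 1) ^ 2 + β₂ / (Sk κ₂ (x 1) ^ 2 * Real.cos (x 2) ^ 2)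
      + β₃ / (Sk κ₂ (x 1) ^ 2 * Real.sin (x 2) ^ 2))

/-- Integral I₁₂. -/
def I12 (κ₂ β₁ β₂ : ℝ) (x : Pt) : ℝ :=
  (Real.cos (x 2) * x 4 - (Real.sin (x 2) / Tk κ₂ (x 1)) * x 5) ^ 2
    + 2 * β₁ * κ₂ ^ 2 * Tk κ₂ (x 1) ^ 2 * Real.cos (x 2) ^ 2
    + 2 * β₂ * κ₂ / (Tk κ₂ (x 1) ^ 2 * Real.cos (x 2) ^ 2)

/-- Integral I₁₃. -/
def I13 (κ₂ β₁ β₃ : ℝ) (x : Pt) : ℝ :=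
  (Real.sin (x 2) * x 4 + (Real.cos (x 2) / Tk κ₂ (x 1)) * x 5) ^ 2
    + 2 * β₁ * κ₂ ^ 2 * Tk κ₂ (x 1) ^ 2 * Real.sin (x 2) ^ 2
    + 2 * β₃ * κ₂ / (Tk κ₂ (x 1) ^ 2 * Real.sin (x 2) ^ 2)

/-- Integral I₂₃. -/
def I23 (κ₂ β₂ β₃ : ℝ) (x : Pt) : ℝ :=
  (x 5) ^ 2 + 2 * β₂ * κ₂ * Real.tan (x 2) ^ 2 + 2 * β₃ * κ₂ / Real.tan (x 2) ^ 2

/-- Integral I₁₂₃. -/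
def I123 (κ₂ β₁ β₂ β₃ : ℝ) (x : Pt) : ℝ :=
  (x 4) ^ 2 + (x 5) ^ 2 / Sk κ₂ (x 1) ^ 2 + 2 * β₁ * κ₂ / Ck κ₂ (x 1) ^ 2
    + 2 * β₂ * κ₂ / (Sk κ₂ (x 1) ^ 2 * Real.cos (x 2) ^ 2)
    + 2 * β₃ * κ₂ / (Sk κ₂ (x 1) ^ 2 * Real.sin (x 2) ^ 2)

/-- The Smorodinsky–Winternitz Hamiltonian H^SW. -/
def HSW (κ₁ κ₂ β₀ β₁ β₂ β₃ : ℝ) (x : Pt) : ℝ :=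
  Tkin κ₁ κ₂ x + β₀ * Tk κ₁ (x 0) ^ 2 + (1 / Sk κ₁ (x 0) ^ 2) *
    (β₁ / Ck κ₂ (x 1) ^ 2 + β₂ / (Sk κ₂ (x 1) ^ 2 * Real.cos (x 2) ^ 2)
      + β₃ / (Sk κ₂ (x 1) ^ 2 * Real.sin (x 2) ^ 2))

/-- Integral I₀₁ of H^SW. -/
def I01 (κ₁ κ₂ β₀ β₁ : ℝ) (x : Pt) : ℝ :=
  J01 κ₁ κ₂ x ^ 2 + 2 * β₀ * Tk κ₁ (x 0) ^ 2 * Ck κ₂ (x 1) ^ 2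
    + 2 * β₁ / (Tk κ₁ (x 0) ^ 2 * Ck κ₂ (x 1) ^ 2)

/-- Integral I₀₂ of H^SW. -/
def I02 (κ₁ κ₂ β₀ β₂ : ℝ) (x : Pt) : ℝ :=
  J02 κ₁ κ₂ x ^ 2 + 2 * β₀ * κ₂ ^ 2 * Tk κ₁ (x 0) ^ 2 * Sk κ₂ (x 1) ^ 2 * Real.cos (x 2) ^ 2
    + 2 * β₂ * κ₂ / (Tk κ₁ (x 0) ^ 2 * Sk κ₂ (x 1) ^ 2 * Real.cos (x 2) ^ 2)

/-- Integral I₀₃ of H^SW. -/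
def I03 (κ₁ κ₂ β₀ β₃ : ℝ) (x : Pt) : ℝ :=
  J03 κ₁ κ₂ x ^ 2 + 2 * β₀ * κ₂ ^ 2 * Tk κ₁ (x 0) ^ 2 * Sk κ₂ (x 1) ^ 2 * Real.sin (x 2) ^ 2
    + 2 * β₃ * κ₂ / (Tk κ₁ (x 0) ^ 2 * Sk κ₂ (x 1) ^ 2 * Real.sin (x 2) ^ 2)

/-- Generalized Kepler–Coulomb Hamiltonian H^GKC₁ = T + U^GKC₁. -/
def HGKC1 (κ₁ κ₂ k β₂ β₃ : ℝ) (x : Pt) : ℝ :=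
  Tkin κ₁ κ₂ x - k / Tk κ₁ (x 0)
    + (1 / (Sk κ₁ (x 0) ^ 2 * Sk κ₂ (x 1) ^ 2)) *
        (β₂ / Real.cos (x 2) ^ 2 + β₃ / Real.sin (x 2) ^ 2)

/-- Generalized Kepler–Coulomb Hamiltonian H^GKC₂ = T + U^GKC₂. -/
def HGKC2 (κ₁ κ₂ k β₁ β₃ : ℝ) (x : Pt) : ℝ :=
  Tkin κ₁ κ₂ x - k / Tk κ₁ (x 0)
    + (1 / Sk κ₁ (x 0) ^ 2) *
        (β₁ / Ck κ₂ (x 1) ^ 2 + β₃ / (Sk κ₂ (x 1) ^ 2 * Real.sin (x 2) ^ 2))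

/-- Generalized Kepler–Coulomb Hamiltonian H^GKC₃ = T + U^GKC₃. -/
def HGKC3 (κ₁ κ₂ k β₁ β₂ : ℝ) (x : Pt) : ℝ :=
  Tkin κ₁ κ₂ x - k / Tk κ₁ (x 0)
    + (1 / Sk κ₁ (x 0) ^ 2) *
        (β₁ / Ck κ₂ (x 1) ^ 2 + β₂ / (Sk κ₂ (x 1) ^ 2 * Real.cos (x 2) ^ 2))

/-- The function L₁. -/
def L1 (κ₁ κ₂ k β₂ β₃ : ℝ) (x : Pt) : ℝ :=
  -(J02 κ₁ κ₂ x * J12 κ₂ x) - J03 κ₁ κ₂ x * J13 κ₂ x + k * κ₂ * Ck κ₂ (x 1)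
    - (2 * κ₂ * Ck κ₂ (x 1) / (Tk κ₁ (x 0) * Sk κ₂ (x 1) ^ 2)) *
        (β₂ / Real.cos (x 2) ^ 2 + β₃ / Real.sin (x 2) ^ 2)

/-- The function L₂. -/
def L2 (κ₁ κ₂ k β₁ β₃ : ℝ) (x : Pt) : ℝ :=
  J01 κ₁ κ₂ x * J12 κ₂ x - J03 κ₁ κ₂ x * J23 x + k * κ₂ * Sk κ₂ (x 1) * Real.cos (x 2)
    - (2 * κ₂ * Real.cos (x 2) / Tk κ₁ (x 0)) *
        (β₁ * Sk κ₂ (x 1) / Ck κ₂ (x 1) ^ 2 + β₃ / (Sk κ₂ (x 1) * Real.sin (x 2) ^ 2))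

/-- The function L₃. -/
def L3 (κ₁ κ₂ k β₁ β₂ : ℝ) (x : Pt) : ℝ :=
  J01 κ₁ κ₂ x * J13 κ₂ x + J02 κ₁ κ₂ x * J23 x + k * κ₂ * Sk κ₂ (x 1) * Real.sin (x 2)
    - (2 * κ₂ * Real.sin (x 2) / Tk κ₁ (x 0)) *
        (β₁ * Sk κ₂ (x 1) / Ck κ₂ (x 1) ^ 2 + β₂ / (Sk κ₂ (x 1) * Real.cos (x 2) ^ 2))

/- ### auxiliary analytic lemmas -/

lemma Ck_zero' (x : ℝ) : Ck 0 x = 1 := by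
  rw [Ck, tsum_eq_single 0 (by intro l hl; simp [zero_pow hl])]; simp

lemma Sk_zero' (x : ℝ) : Sk 0 x = x := by
  rw [Sk, tsum_eq_single 0 (by intro l hl; simp [zero_pow hl])]; simp

lemma hasSum_Ck {κ : ℝ} {c : ℂ} (hc : c ^ 2 = (κ : ℂ)) (x : ℝ) :
    HasSum (fun l : ℕ => (((-κ) ^ l * x ^ (2 * l) / (Nat.factorial (2 * l) : ℝ) : ℝ) : ℂ))
      (Complex.cos (c * x)) := by
  have h := Complex.hasSum_cos (c * x)
  convert h using 2 with l
  push_cast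
  rw [mul_pow, pow_mul, pow_mul, hc]
  ring

lemma hasSum_Sk {κ : ℝ} {c : ℂ} (hc : c ^ 2 = (κ : ℂ)) (hc0 : c ≠ 0) (x : ℝ) :
    HasSum (fun l : ℕ => (((-κ) ^ l * x ^ (2 * l + 1) / (Nat.factorial (2 * l + 1) : ℝ) : ℝ) : ℂ))
      (Complex.sin (c * x) / c) := by
  have h := (Complex.hasSum_sin (c * x)).div_const c
  replace h : HasSum (fun i : ℕ => (-1) ^ i * (c * x) ^ (2 * i + 1) / ((2 * i + 1).factorial : ℂ) / c) (Complex.sin (c * x) / c) := h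
  convert h using 2 with l
  push_cast
  rw [mul_pow, pow_succ c (2*l), pow_mul c 2 l, hc, eq_div_iff hc0]
  ring

lemma Ck_eq {κ : ℝ} {c : ℂ} (hc : c ^ 2 = (κ : ℂ)) (x : ℝ) :
    (Ck κ x : ℂ) = Complex.cos (c * x) := by
  have h := hasSum_Ck hc x
  have hre : HasSum (fun l : ℕ => (-κ) ^ l * x ^ (2 * l) / (Nat.factorial (2 * l) : ℝ))
      ((Complex.cos (c * x)).re) := by
    simpa only [Complex.reCLM_apply, Complex.ofReal_re] using Complex.reCLM.hasSum h
  have him : (Complex.cos (c * x)).im = 0 := by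
    have h2 := Complex.imCLM.hasSum h
    simp only [Complex.imCLM_apply, Complex.ofReal_im] at h2
    exact h2.unique hasSum_zero
  apply Complex.ext <;> simp [Ck, hre.tsum_eq, him]

lemma Sk_eq {κ : ℝ} {c : ℂ} (hc : c ^ 2 = (κ : ℂ)) (hc0 : c ≠ 0) (x : ℝ) :
    (Sk κ x : ℂ) = Complex.sin (c * x) / c := by
  have h := hasSum_Sk hc hc0 x
  have hre : HasSum (fun l : ℕ => (-κ) ^ l * x ^ (2 * l + 1) / (Nat.factorial (2 * l + 1) : ℝ))
      ((Complex.sin (c * x) / c).re) := by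
    simpa only [Complex.reCLM_apply, Complex.ofReal_re] using Complex.reCLM.hasSum h
  have him : (Complex.sin (c * x) / c).im = 0 := by
    have h2 := Complex.imCLM.hasSum h
    simp only [Complex.imCLM_apply, Complex.ofReal_im] at h2
    exact h2.unique hasSum_zero
  apply Complex.ext <;> simp [Sk, hre.tsum_eq, him]

lemma exists_c (κ : ℝ) : ∃ c : ℂ, c ^ 2 = (κ : ℂ) := by
  rcases le_or_gt 0 κ with h | h
  · exact ⟨(Real.sqrt κ : ℂ), by rw [← Complex.ofReal_pow, Real.sq_sqrt h]⟩
  · refine ⟨Complex.I * (Real.sqrt (-κ) : ℂ), ?_⟩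
    rw [mul_pow, Complex.I_sq, ← Complex.ofReal_pow, Real.sq_sqrt (by linarith)]
    push_cast; ring

lemma Ck_sq_add (κ x : ℝ) : Ck κ x ^ 2 + κ * Sk κ x ^ 2 = 1 := by
  rcases eq_or_ne κ 0 with rfl | hκ
  · simp [Ck_zero']
  · obtain ⟨c, hc⟩ := exists_c κ
    have hc0 : c ≠ 0 := fun h => hκ (by simpa [h] using hc.symm)
    have : ((Ck κ x ^ 2 + κ * Sk κ x ^ 2 : ℝ) : ℂ) = 1 := by
      push_cast
      rw [Ck_eq hc, Sk_eq hc hc0, ← hc]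
      field_simp
      exact Complex.cos_sq_add_sin_sq _
    exact_mod_cast this

lemma hasDerivAt_Sk (κ x : ℝ) : HasDerivAt (Sk κ) (Ck κ x) x := by
  rcases eq_or_ne κ 0 with rfl | hκ
  · have : Sk 0 = fun x : ℝ => x := funext Sk_zero'
    rw [this, Ck_zero']
    exact hasDerivAt_id x
  · obtain ⟨c, hc⟩ := exists_c κ
    have hc0 : c ≠ 0 := fun h => hκ (by simpa [h] using hc.symm)
    have hD : HasDerivAt (fun t : ℝ => (Complex.sin (c * t) / c)) (Complex.cos (c * x)) x := by
      have h1 := ((((hasDerivAt_id ((x : ℝ) : ℂ)).const_mul c).csin).div_const c).comp_ofReal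
      simp only [id_eq, mul_one] at h1
      rwa [mul_div_assoc, div_self hc0, mul_one] at h1
    have hre := Complex.reCLM.hasFDerivAt.comp_hasDerivAt x hD
    have hfun : Sk κ = fun t : ℝ => (Complex.sin (c * t) / c).re := by
      funext t
      rw [← Sk_eq hc hc0 t, Complex.ofReal_re]
    rw [hfun]
    have : (Complex.reCLM (Complex.cos (c * x))) = Ck κ x := by
      rw [Complex.reCLM_apply, ← Ck_eq hc x, Complex.ofReal_re]
    rw [← this]
    exact hre

lemma hasDerivAt_Ck (κ x : ℝ) : HasDerivAt (Ck κ) (-κ * Sk κ x) x := by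
  rcases eq_or_ne κ 0 with rfl | hκ
  · have : Ck 0 = fun _ : ℝ => (1 : ℝ) := funext Ck_zero'
    rw [this]
    simpa using hasDerivAt_const x (1 : ℝ)
  · obtain ⟨c, hc⟩ := exists_c κ
    have hc0 : c ≠ 0 := fun h => hκ (by simpa [h] using hc.symm)
    have hD : HasDerivAt (fun t : ℝ => Complex.cos (c * t)) (-Complex.sin (c * (x : ℂ)) * c) x := by
      have h1 := (((hasDerivAt_id ((x : ℝ) : ℂ)).const_mul c).ccos).comp_ofReal
      simpa only [id_eq, mul_one] using h1
    have hre := Complex.reCLM.hasFDerivAt.comp_hasDerivAt x hD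
    have hfun : Ck κ = fun t : ℝ => (Complex.cos (c * t)).re := by
      funext t; rw [← Ck_eq hc t, Complex.ofReal_re]
    rw [hfun]
    have hv : Complex.reCLM (-Complex.sin (c * (x : ℂ)) * c) = -κ * Sk κ x := by
      have : -Complex.sin (c * (x : ℂ)) * c = ((-κ * Sk κ x : ℝ) : ℂ) := by
        push_cast
        rw [Sk_eq hc hc0, ← hc]
        field_simp
      rw [this, Complex.reCLM_apply, Complex.ofReal_re]
    rw [← hv]
    exact hre

lemma hasDerivAt_CS (κ : ℝ) {t : ℝ} (hs : Sk κ t ≠ 0) :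
    HasDerivAt (fun u : ℝ => Ck κ u / Sk κ u) (-(1 / Sk κ t ^ 2)) t := by
  have h := (hasDerivAt_Ck κ t).div (hasDerivAt_Sk κ t) hs
  replace h : HasDerivAt (fun u : ℝ => Ck κ u / Sk κ u) ((-κ * Sk κ t * Sk κ t - Ck κ t * Ck κ t) / Sk κ t ^ 2) t := h
  convert h using 1
  have hid := Ck_sq_add κ t
  field_simp
  linear_combination hid

lemma pd_eq {f : Pt → ℝ} {L : Pt →L[ℝ] ℝ} {x : Pt} (h : HasFDerivAt f L x) (i : Fin 6) :
    pd f i x = L (Pi.single i 1) := by rw [pd, h.fderiv]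

lemma hfd_comp {h : ℝ → ℝ} {h' : ℝ} {x : Pt} (i : Fin 6) (hh : HasDerivAt h h' (x i)) :
    HasFDerivAt (fun x : Pt => h (x i)) (h' • (ContinuousLinearMap.proj i : Pt →L[ℝ] ℝ)) x :=
  hh.comp_hasFDerivAt x (by exact (ContinuousLinearMap.proj i : Pt →L[ℝ] ℝ).hasFDerivAt)

set_option maxHeartbeats 2000000

/-- each of the six generators of the geodesic polar realization
Poisson commutes with the kinetic energy T at every point of D. -/
theorem generators_commute_with_kinetic_energy (κ₁ κ₂ : ℝ) (hκ₂ : κ₂ ≠ 0) :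
    ∀ x ∈ D κ₁ κ₂,
      pb (J01 κ₁ κ₂) (Tkin κ₁ κ₂) x = 0 ∧
      pb (J02 κ₁ κ₂) (Tkin κ₁ κ₂) x = 0 ∧
      pb (J03 κ₁ κ₂) (Tkin κ₁ κ₂) x = 0 ∧
      pb (J12 κ₂) (Tkin κ₁ κ₂) x = 0 ∧
      pb (J13 κ₂) (Tkin κ₁ κ₂) x = 0 ∧
      pb J23 (Tkin κ₁ κ₂) x = 0 := by
  intro x hx
  obtain ⟨hs1, hc1, hs2, hc2, hcp, hsp⟩ := hx
  have hd1ne : κ₂ * Sk κ₁ (x 0) ^ 2 ≠ 0 := by positivity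
  have hs2sq : Sk κ₂ (x 1) ^ 2 ≠ 0 := by positivity
  -- unary derivatives
  have hA : HasDerivAt (fun t : ℝ => (κ₂ * Sk κ₁ t ^ 2)⁻¹) _ (x 0) :=
    (((hasDerivAt_Sk κ₁ (x 0)).pow 2).const_mul κ₂).inv hd1ne
  have hB : HasDerivAt (fun t : ℝ => (Sk κ₂ t ^ 2)⁻¹) _ (x 1) :=
    ((hasDerivAt_Sk κ₂ (x 1)).pow 2).inv hs2sq
  have hq1 := hasDerivAt_CS κ₁ hs1
  have hq2 := hasDerivAt_CS κ₂ hs2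
  have hs2inv : HasDerivAt (fun t : ℝ => (Sk κ₂ t)⁻¹) _ (x 1) :=
    (hasDerivAt_Sk κ₂ (x 1)).inv hs2
  -- identities
  have hid1 := Ck_sq_add κ₁ (x 0)
  have hid2 := Ck_sq_add κ₂ (x 1)
  have hpyth := Real.sin_sq_add_cos_sq (x 2)
  -- kinetic energy
  have hTfun : Tkin κ₁ κ₂ = fun x : Pt =>
      (1/2 : ℝ) * (x 3 ^ 2 + x 4 ^ 2 * (κ₂ * Sk κ₁ (x 0) ^ 2)⁻¹
        + x 5 ^ 2 * (κ₂ * Sk κ₁ (x 0) ^ 2)⁻¹ * (Sk κ₂ (x 1) ^ 2)⁻¹) := by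
    funext y; rw [Tkin]; ring
  have hT : HasFDerivAt (fun x : Pt =>
      (1/2 : ℝ) * (x 3 ^ 2 + x 4 ^ 2 * (κ₂ * Sk κ₁ (x 0) ^ 2)⁻¹
        + x 5 ^ 2 * (κ₂ * Sk κ₁ (x 0) ^ 2)⁻¹ * (Sk κ₂ (x 1) ^ 2)⁻¹)) _ x :=
    (((hfd_comp 3 (hasDerivAt_pow 2 (x 3))).add
        ((hfd_comp 4 (hasDerivAt_pow 2 (x 4))).mul (hfd_comp 0 hA))).add
      (((hfd_comp 5 (hasDerivAt_pow 2 (x 5))).mul (hfd_comp 0 hA)).mul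
        (hfd_comp 1 hB))).const_mul (1/2 : ℝ)
  refine ⟨?_, ?_, ?_, ?_, ?_, ?_⟩
  · -- J01
    have hfun : J01 κ₁ κ₂ = fun x : Pt =>
        Ck κ₂ (x 1) * x 3 - Sk κ₂ (x 1) * (Ck κ₁ (x 0) / Sk κ₁ (x 0)) * x 4 := by
      funext y; rw [J01, Tk, div_div_eq_mul_div]; ring
    have hJ : HasFDerivAt (fun x : Pt =>
        Ck κ₂ (x 1) * x 3 - Sk κ₂ (x 1) * (Ck κ₁ (x 0) / Sk κ₁ (x 0)) * x 4) _ x :=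
      ((hfd_comp 1 (hasDerivAt_Ck κ₂ (x 1))).mul (hfd_comp 3 (hasDerivAt_id (x 3)))).sub
        (((hfd_comp 1 (hasDerivAt_Sk κ₂ (x 1))).mul (hfd_comp 0 hq1)).mul
          (hfd_comp 4 (hasDerivAt_id (x 4))))
    rw [hfun, hTfun, pb, Fin.sum_univ_three]
    simp only [pd_eq hJ, pd_eq hT]
    simp [Pi.single_apply]
    field_simp
    ring
  · -- J02
    have hfun : J02 κ₁ κ₂ = fun x : Pt =>
        κ₂ * Sk κ₂ (x 1) * Real.cos (x 2) * x 3
          + Ck κ₂ (x 1) * Real.cos (x 2) * (Ck κ₁ (x 0) / Sk κ₁ (x 0)) * x 4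
          - Real.sin (x 2) * (Ck κ₁ (x 0) / Sk κ₁ (x 0)) * (Sk κ₂ (x 1))⁻¹ * x 5 := by
      funext y; rw [J02, Tk]
      simp only [div_mul_eq_div_div, div_div_eq_mul_div]; ring
    have hJ : HasFDerivAt (fun x : Pt =>
        κ₂ * Sk κ₂ (x 1) * Real.cos (x 2) * x 3
          + Ck κ₂ (x 1) * Real.cos (x 2) * (Ck κ₁ (x 0) / Sk κ₁ (x 0)) * x 4
          - Real.sin (x 2) * (Ck κ₁ (x 0) / Sk κ₁ (x 0)) * (Sk κ₂ (x 1))⁻¹ * x 5) _ x :=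
      ((((hfd_comp 1 ((hasDerivAt_Sk κ₂ (x 1)).const_mul κ₂)).mul
            (hfd_comp 2 (Real.hasDerivAt_cos (x 2)))).mul
          (hfd_comp 3 (hasDerivAt_id (x 3)))).add
        ((((hfd_comp 1 (hasDerivAt_Ck κ₂ (x 1))).mul
              (hfd_comp 2 (Real.hasDerivAt_cos (x 2)))).mul (hfd_comp 0 hq1)).mul
          (hfd_comp 4 (hasDerivAt_id (x 4))))).sub
        ((((hfd_comp 2 (Real.hasDerivAt_sin (x 2))).mul (hfd_comp 0 hq1)).mul
            (hfd_comp 1 hs2inv)).mul (hfd_comp 5 (hasDerivAt_id (x 5))))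
    rw [hfun, hTfun, pb, Fin.sum_univ_three]
    simp only [pd_eq hJ, pd_eq hT]
    simp [Pi.single_apply]
    field_simp
    linear_combination (Real.cos (x 2) * x 5 ^ 2 * Ck κ₁ (x 0)) * hid2
  · -- J03
    have hfun : J03 κ₁ κ₂ = fun x : Pt =>
        κ₂ * Sk κ₂ (x 1) * Real.sin (x 2) * x 3
          + Ck κ₂ (x 1) * Real.sin (x 2) * (Ck κ₁ (x 0) / Sk κ₁ (x 0)) * x 4
          + Real.cos (x 2) * (Ck κ₁ (x 0) / Sk κ₁ (x 0)) * (Sk κ₂ (x 1))⁻¹ * x 5 := by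
      funext y; rw [J03, Tk]
      simp only [div_mul_eq_div_div, div_div_eq_mul_div]; ring
    have hJ : HasFDerivAt (fun x : Pt =>
        κ₂ * Sk κ₂ (x 1) * Real.sin (x 2) * x 3
          + Ck κ₂ (x 1) * Real.sin (x 2) * (Ck κ₁ (x 0) / Sk κ₁ (x 0)) * x 4
          + Real.cos (x 2) * (Ck κ₁ (x 0) / Sk κ₁ (x 0)) * (Sk κ₂ (x 1))⁻¹ * x 5) _ x :=
      ((((hfd_comp 1 ((hasDerivAt_Sk κ₂ (x 1)).const_mul κ₂)).mul
            (hfd_comp 2 (Real.hasDerivAt_sin (x 2)))).mul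
          (hfd_comp 3 (hasDerivAt_id (x 3)))).add
        ((((hfd_comp 1 (hasDerivAt_Ck κ₂ (x 1))).mul
              (hfd_comp 2 (Real.hasDerivAt_sin (x 2)))).mul (hfd_comp 0 hq1)).mul
          (hfd_comp 4 (hasDerivAt_id (x 4))))).add
        ((((hfd_comp 2 (Real.hasDerivAt_cos (x 2))).mul (hfd_comp 0 hq1)).mul
            (hfd_comp 1 hs2inv)).mul (hfd_comp 5 (hasDerivAt_id (x 5))))
    rw [hfun, hTfun, pb, Fin.sum_univ_three]
    simp only [pd_eq hJ, pd_eq hT]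
    simp [Pi.single_apply]
    field_simp
    linear_combination (Real.sin (x 2) * x 5 ^ 2 * Ck κ₁ (x 0)) * hid2
  · -- J12
    have hfun : J12 κ₂ = fun x : Pt =>
        Real.cos (x 2) * x 4 - Real.sin (x 2) * (Ck κ₂ (x 1) / Sk κ₂ (x 1)) * x 5 := by
      funext y; rw [J12, Tk, div_div_eq_mul_div]; ring
    have hJ : HasFDerivAt (fun x : Pt =>
        Real.cos (x 2) * x 4 - Real.sin (x 2) * (Ck κ₂ (x 1) / Sk κ₂ (x 1)) * x 5) _ x :=
      ((hfd_comp 2 (Real.hasDerivAt_cos (x 2))).mul (hfd_comp 4 (hasDerivAt_id (x 4)))).sub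
        (((hfd_comp 2 (Real.hasDerivAt_sin (x 2))).mul (hfd_comp 1 hq2)).mul
          (hfd_comp 5 (hasDerivAt_id (x 5))))
    rw [hfun, hTfun, pb, Fin.sum_univ_three]
    simp only [pd_eq hJ, pd_eq hT]
    simp [Pi.single_apply]
    field_simp
    ring
  · -- J13
    have hfun : J13 κ₂ = fun x : Pt =>
        Real.sin (x 2) * x 4 + Real.cos (x 2) * (Ck κ₂ (x 1) / Sk κ₂ (x 1)) * x 5 := by
      funext y; rw [J13, Tk, div_div_eq_mul_div]; ring
    have hJ : HasFDerivAt (fun x : Pt =>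
        Real.sin (x 2) * x 4 + Real.cos (x 2) * (Ck κ₂ (x 1) / Sk κ₂ (x 1)) * x 5) _ x :=
      ((hfd_comp 2 (Real.hasDerivAt_sin (x 2))).mul (hfd_comp 4 (hasDerivAt_id (x 4)))).add
        (((hfd_comp 2 (Real.hasDerivAt_cos (x 2))).mul (hfd_comp 1 hq2)).mul
          (hfd_comp 5 (hasDerivAt_id (x 5))))
    rw [hfun, hTfun, pb, Fin.sum_univ_three]
    simp only [pd_eq hJ, pd_eq hT]
    simp [Pi.single_apply]
    field_simp
    ring
  · -- J23
    have hJ : HasFDerivAt (fun x : Pt => x 5)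
        (ContinuousLinearMap.proj 5 : Pt →L[ℝ] ℝ) x := by
      exact (ContinuousLinearMap.proj 5 : Pt →L[ℝ] ℝ).hasFDerivAt
    rw [show J23 = fun x : Pt => x 5 from rfl, hTfun, pb, Fin.sum_univ_three]
    simp only [pd_eq hJ, pd_eq hT]
    simp [Pi.single_apply]


end
end Paper
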